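/- Let V and V₀ be environments and σ_t a type substitution. Let e be a partial expression such that every function symbol occurring in e has a transparent principal type (a declaration h : (τ₁,…,τₙ) → τ with tvar(τᵢ) ⊆ tvar(τ) for all i). If e ∈ Expr^τ_{Σ⊥}(V₀) ∩ Expr^{τσ_t}_{Σ⊥}(V), then V = V₀σ_t on dvar(e), i.e., for every data variable x occurring in e and every type τ': (x : τ') ∈ V if and only if (x : τ') ∈ V₀σ_t, where V₀σ_t = {x : τ''σ_t | (x : τ'') ∈ V₀}. -/

import Mathlib

namespace ACRWL

/-- Partial expressions: data variables, bottom, data constructor applications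
and defined function applications (symbols named by natural numbers). -/
inductive Expr : Type where
  | var : ℕ → Expr
  | bot : Expr
  | con : ℕ → List Expr → Expr
  | fn  : ℕ → List Expr → Expr

namespace Expr

/-- Occurrence of a data variable in an expression. -/
inductive Occurs (x : ℕ) : Expr → Prop where
  | var : Occurs x (var x)
  | con {c : ℕ} {es : List Expr} {e : Expr} : e ∈ es → Occurs x e → Occurs x (con c es)
  | fn {f : ℕ} {es : List Expr} {e : Expr} : e ∈ es → Occurs x e → Occurs x (fn f es)

/-- Partial data terms: built from variables, ⊥ and data constructors only. -/
inductive IsTerm : Expr → Prop where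
  | var (x : ℕ) : IsTerm (var x)
  | bot : IsTerm bot
  | con {c : ℕ} {es : List Expr} : (∀ e ∈ es, IsTerm e) → IsTerm (con c es)

/-- Total expressions: no occurrence of ⊥. -/
inductive NoBot : Expr → Prop where
  | var (x : ℕ) : NoBot (var x)
  | con {c : ℕ} {es : List Expr} : (∀ e ∈ es, NoBot e) → NoBot (con c es)
  | fn {f : ℕ} {es : List Expr} : (∀ e ∈ es, NoBot e) → NoBot (fn f es)

/-- Total data terms. -/
def IsTotalTerm (e : Expr) : Prop := IsTerm e ∧ NoBot e

/-- Application of a data substitution. -/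
def subst (σ : ℕ → Expr) : Expr → Expr
  | var x => σ x
  | bot => bot
  | con c es => con c (es.attach.map fun e => subst σ e.1)
  | fn f es => fn f (es.attach.map fun e => subst σ e.1)
termination_by e => sizeOf e
decreasing_by
  all_goals (simp only [Expr.con.sizeOf_spec, Expr.fn.sizeOf_spec]; have := List.sizeOf_lt_of_mem e.2; omega)

/-- Number of occurrences of the variable `x`. -/
def varCount (x : ℕ) : Expr → ℕ
  | var y => if y = x then 1 else 0
  | bot => 0
  | con _ es => (es.attach.map fun e => varCount x e.1).sum
  | fn _ es => (es.attach.map fun e => varCount x e.1).sum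
termination_by e => sizeOf e
decreasing_by
  all_goals (simp only [Expr.con.sizeOf_spec, Expr.fn.sizeOf_spec]; have := List.sizeOf_lt_of_mem e.2; omega)

end Expr

/-- A set of equational axioms between (total data) terms. -/
abbrev Axioms := Set (Expr × Expr)

/-- A data substitution mapping every variable to a partial data term. -/
def TermSub (σ : ℕ → Expr) : Prop := ∀ x, (σ x).IsTerm

/-- `σ` is safe for `t`: variables occurring more than once in `t`
are mapped to total data terms. -/
def SafeSub (σ : ℕ → Expr) (t : Expr) : Prop :=
  ∀ x, 2 ≤ Expr.varCount x t → Expr.IsTotalTerm (σ x)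

/-- Well-formed set of equational axioms: a finite set of equations between
total data terms. -/
def WfAxioms (C : Axioms) : Prop :=
  C.Finite ∧ ∀ p ∈ C, Expr.IsTotalTerm p.1 ∧ Expr.IsTotalTerm p.2

/-- `[C]_⊒` : the instances of the axioms of `C`, read in both directions,
under safe partial data substitutions. -/
def CInstances (C : Axioms) : Set (Expr × Expr) :=
  { q | ∃ p ∈ C, ∃ σ : ℕ → Expr, TermSub σ ∧
      ((SafeSub σ p.1 ∧ q = (p.1.subst σ, p.2.subst σ)) ∨
       (SafeSub σ p.2 ∧ q = (p.2.subst σ, p.1.subst σ))) }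

/-- Every axiom is regular : both sides have the same data variables. -/
def RegularAxioms (C : Axioms) : Prop :=
  ∀ p ∈ C, ∀ x, Expr.Occurs x p.1 ↔ Expr.Occurs x p.2

/-- Every axiom is non-collapsing : neither side is a variable. -/
def NonCollapsing (C : Axioms) : Prop :=
  ∀ p ∈ C, (∀ x, p.1 ≠ Expr.var x) ∧ (∀ x, p.2 ≠ Expr.var x)

/-- Strongly regular set of axioms. -/
def StronglyRegular (C : Axioms) : Prop := RegularAxioms C ∧ NonCollapsing C

/-- The inequational calculus associated to `C`, deriving approximation
inequalities `s ⊒ t` between partial data terms. -/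
inductive Geq (C : Axioms) : Expr → Expr → Prop where
  | bot {t : Expr} : t.IsTerm → Geq C t Expr.bot
  | refl {t : Expr} : t.IsTerm → Geq C t t
  | trans {t t' t'' : Expr} : Geq C t t' → Geq C t' t'' → Geq C t t''
  | mono {c : ℕ} {ts ss : List Expr} : ts.length = ss.length →
      (∀ p ∈ ts.zip ss, Geq C p.1 p.2) → Geq C (Expr.con c ts) (Expr.con c ss)
  | ax {s t : Expr} : (s, t) ∈ CInstances C → Geq C s t

/-- `s ≈_C t` iff `s ⊒_C t` and `t ⊒_C s`. -/
def EqC (C : Axioms) (s t : Expr) : Prop := Geq C s t ∧ Geq C t s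

end ACRWL

namespace ACRWL

/-- Polymorphic types built from type variables and type constructors. -/
inductive Ty : Type where
  | tvar : ℕ → Ty
  | tcon : ℕ → List Ty → Ty

namespace Ty

/-- Occurrence of a type variable in a type. -/
inductive OccursT (α : ℕ) : Ty → Prop where
  | tvar : OccursT α (tvar α)
  | tcon {K : ℕ} {τs : List Ty} {τ : Ty} : τ ∈ τs → OccursT α τ → OccursT α (tcon K τs)

/-- Application of a type substitution. -/
def subst (σ : ℕ → Ty) : Ty → Ty
  | tvar α => σ α
  | tcon K τs => tcon K (τs.attach.map fun τ => subst σ τ.1)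
termination_by τ => sizeOf τ
decreasing_by
  all_goals (simp only [Ty.tcon.sizeOf_spec]; have := List.sizeOf_lt_of_mem τ.2; omega)

end Ty

/-- A principal type declaration `(τ₁,…,τₙ) → τ`. -/
structure Decl : Type where
  args : List Ty
  res : Ty

/-- Transparency: every type variable of the argument types occurs in the
result type. -/
def Decl.Transparent (d : Decl) : Prop :=
  ∀ α : ℕ, (∃ τ ∈ d.args, Ty.OccursT α τ) → Ty.OccursT α d.res

/-- Instance of a declaration under a type substitution. -/
def Decl.substT (σt : ℕ → Ty) (d : Decl) : Decl :=
  ⟨d.args.map (Ty.subst σt), d.res.subst σt⟩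

/-- A variant of a declaration: a renaming of its type variables. -/
def IsVariant (d d' : Decl) : Prop :=
  ∃ ρ : ℕ → ℕ, Function.Injective ρ ∧ d' = d.substT (fun α => Ty.tvar (ρ α))

/-- A polymorphic signature: (optional) principal type declarations for data
constructors and for defined function symbols, the former transparent. -/
structure Signature : Type where
  dc : ℕ → Option Decl
  fs : ℕ → Option Decl
  dc_trans : ∀ c d, dc c = some d → Decl.Transparent d

/-- An environment: at most one type annotation per data variable. -/
abbrev Env := ℕ → Option Ty

/-- Instance of an environment under a type substitution. -/
def Env.substT (V : Env) (σt : ℕ → Ty) : Env := fun x => (V x).map (Ty.subst σt)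

/-- The type inference system: `HasType Sg V e τ` is the judgement
`V ⊢_{Σ⊥} e : τ`.  The symbol `⊥` has principal type `⊥ : → α`, hence
every type is an admissible instance for it. -/
inductive HasType (Sg : Signature) (V : Env) : Expr → Ty → Prop where
  | var {x : ℕ} {τ : Ty} : V x = some τ → HasType Sg V (Expr.var x) τ
  | bot (τ : Ty) : HasType Sg V Expr.bot τ
  | con {c : ℕ} {es : List Expr} {d : Decl} {σt : ℕ → Ty} :
      Sg.dc c = some d → es.length = d.args.length →
      (∀ p ∈ es.zip d.args, HasType Sg V p.1 (Ty.subst σt p.2)) →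
      HasType Sg V (Expr.con c es) (Ty.subst σt d.res)
  | fn {f : ℕ} {es : List Expr} {d : Decl} {σt : ℕ → Ty} :
      Sg.fs f = some d → es.length = d.args.length →
      (∀ p ∈ es.zip d.args, HasType Sg V p.1 (Ty.subst σt p.2)) →
      HasType Sg V (Expr.fn f es) (Ty.subst σt d.res)

/-- Occurrence of a function symbol in an expression. -/
inductive FnOccurs (f : ℕ) : Expr → Prop where
  | head {es : List Expr} : FnOccurs f (Expr.fn f es)
  | con {c : ℕ} {es : List Expr} {e : Expr} : e ∈ es → FnOccurs f e → FnOccurs f (Expr.con c es)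
  | fn {g : ℕ} {es : List Expr} {e : Expr} : e ∈ es → FnOccurs f e → FnOccurs f (Expr.fn g es)

end ACRWL

namespace ACRWL

/-- Lemma 4.5: if every function symbol occurring in `e` has a transparent
principal type and `e ∈ Expr^τ_{Σ⊥}(V₀) ∩ Expr^{τσt}_{Σ⊥}(V)`, then `V` and
`V₀σt` agree on the data variables of `e`. -/

theorem Ty.subst_tcon (σ : ℕ → Ty) (K : ℕ) (τs : List Ty) :
    Ty.subst σ (Ty.tcon K τs) = Ty.tcon K (τs.map (Ty.subst σ)) := by
  rw [Ty.subst]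
  simp [List.attach_map_val]

theorem Ty.subst_congr {σA σB : ℕ → Ty} (τ : Ty)
    (h : ∀ α, Ty.OccursT α τ → σA α = σB α) : τ.subst σA = τ.subst σB := by
  induction τ using Ty.subst.induct with
  | case1 α => simpa [Ty.subst] using h α .tvar
  | case2 K τs ih =>
    rw [Ty.subst_tcon, Ty.subst_tcon]
    congr 1
    apply List.map_congr_left
    intro τ hτ
    exact ih ⟨τ, hτ⟩ (fun α hα => h α (.tcon hτ hα))

theorem Ty.subst_subst (σ σ₀ : ℕ → Ty) (τ : Ty) :
    (τ.subst σ₀).subst σ = τ.subst (fun α => (σ₀ α).subst σ) := by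
  induction τ using Ty.subst.induct with
  | case1 α => simp [Ty.subst]
  | case2 K τs ih =>
    rw [Ty.subst_tcon, Ty.subst_tcon, Ty.subst_tcon, List.map_map]
    congr 1
    apply List.map_congr_left
    intro τ hτ
    exact ih ⟨τ, hτ⟩

theorem Ty.subst_eq_of_occursT {σA σB : ℕ → Ty} {α : ℕ} {τ : Ty}
    (hocc : Ty.OccursT α τ) (heq : τ.subst σA = τ.subst σB) : σA α = σB α := by
  induction hocc with
  | tvar => simpa [Ty.subst] using heq
  | tcon hmem _ ih =>
    rw [Ty.subst_tcon, Ty.subst_tcon] at heq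
    injection heq with _ heq
    exact ih (by
      have := List.map_eq_map_iff.mp heq
      exact this _ hmem)

theorem env_eq_on_dvar (Sg : Signature) (V V₀ : Env) (σt : ℕ → Ty)
    (e : Expr) (τ : Ty)
    (htrans : ∀ f, FnOccurs f e → ∀ d, Sg.fs f = some d → Decl.Transparent d)
    (h₀ : HasType Sg V₀ e τ) (h : HasType Sg V e (Ty.subst σt τ)) :
    ∀ x : ℕ, Expr.Occurs x e → V x = (V₀ x).map (Ty.subst σt) := by
  induction h₀ with
  | var hx =>
    intro x hocc
    cases hocc
    cases h with
    | var hv => rw [hv, hx]; rfl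
  | bot =>
    intro x hocc
    cases hocc
  | @con c es d σt₀ hd hlen hargs ih =>
    intro x hocc
    generalize hgen : Ty.subst σt (Ty.subst σt₀ d.res) = τ' at h
    cases h with
    | @con _ _ d' σt₁ hd' hlen' hargs' =>
      rw [hd] at hd'; injection hd' with hd'; subst hd'
      cases hocc with
      | @con _ _ e' hmem hocc' =>
        obtain ⟨i, hi, rfl⟩ := List.mem_iff_getElem.mp hmem
        have hi' : i < d.args.length := hlen ▸ hi
        have hzip : (es[i], d.args[i]) ∈ es.zip d.args := by
          have := List.getElem_zip (l := es) (l' := d.args) (i := i)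
            (h := by rw [List.length_zip]; omega)
          exact this ▸ List.getElem_mem _
        have hkey : Ty.subst σt₁ d.args[i] = Ty.subst σt (Ty.subst σt₀ d.args[i]) := by
          rw [Ty.subst_subst]
          apply Ty.subst_congr
          intro α hα
          have hres : Ty.OccursT α d.res := Sg.dc_trans c d hd α ⟨d.args[i], List.getElem_mem _, hα⟩
          have : Ty.subst σt₁ d.res = Ty.subst (fun β => (σt₀ β).subst σt) d.res := by
            rw [← Ty.subst_subst]; exact hgen.symm
          exact Ty.subst_eq_of_occursT hres this
        have htyp : HasType Sg V es[i] (Ty.subst σt (Ty.subst σt₀ d.args[i])) := by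
          rw [← hkey]; exact hargs' _ hzip
        exact ih _ hzip (fun g hg => htrans g (.con hmem hg)) htyp x hocc'
  | @fn f es d σt₀ hd hlen hargs ih =>
    intro x hocc
    generalize hgen : Ty.subst σt (Ty.subst σt₀ d.res) = τ' at h
    cases h with
    | @fn _ _ d' σt₁ hd' hlen' hargs' =>
      rw [hd] at hd'; injection hd' with hd'; subst hd'
      cases hocc with
      | @fn _ _ e' hmem hocc' =>
        obtain ⟨i, hi, rfl⟩ := List.mem_iff_getElem.mp hmem
        have hi' : i < d.args.length := hlen ▸ hi
        have hzip : (es[i], d.args[i]) ∈ es.zip d.args := by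
          have := List.getElem_zip (l := es) (l' := d.args) (i := i)
            (h := by rw [List.length_zip]; omega)
          exact this ▸ List.getElem_mem _
        have hkey : Ty.subst σt₁ d.args[i] = Ty.subst σt (Ty.subst σt₀ d.args[i]) := by
          rw [Ty.subst_subst]
          apply Ty.subst_congr
          intro α hα
          have hres : Ty.OccursT α d.res :=
            htrans f .head d hd α ⟨d.args[i], List.getElem_mem _, hα⟩
          have : Ty.subst σt₁ d.res = Ty.subst (fun β => (σt₀ β).subst σt) d.res := by
            rw [← Ty.subst_subst]; exact hgen.symm
          exact Ty.subst_eq_of_occursT hres this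
        have htyp : HasType Sg V es[i] (Ty.subst σt (Ty.subst σt₀ d.args[i])) := by
          rw [← hkey]; exact hargs' _ hzip
        exact ih _ hzip (fun g hg => htrans g (.fn hmem hg)) htyp x hocc'


end ACRWL
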